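/- Let ι = (i_1,…,i_k) be a reduced word for an element w of S_{n+1} and let c ∈ (ℂ^×)^k. Then the matrix Θ_ι(c) ∈ SL_{n+1}(ℂ) is lower triangular with nonzero diagonal entries, and for every i ∈ {1,…,n}: (a) Θ_ι(c)_{i,i} / Θ_ι(c)_{i+1,i+1} = ∏_{l=1}^k c_l^{−a_{i_l,i}}, and (b) Θ_ι(c)_{i+1,i} = Θ_ι(c)_{i+1,i+1} · ∑_{1≤m≤k, i_m=i} c_m^{-1} ∏_{l=m+1}^k c_l^{−a_{i_l,i}}, where (a_{pq}) is the Cartan matrix of type A_n. -/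

import Mathlib

/-!
STATEMENT 17: For a reduced word ι of an element w of S_{n+1} and c ∈ (ℂ^×)^k, the
matrix Θ_ι(c) is lower triangular with nonzero diagonal entries, and for every
i ∈ {1,…,n}:
(a) Θ_ι(c)_{i,i} / Θ_ι(c)_{i+1,i+1} = ∏_{l=1}^k c_l^{−a_{i_l,i}},
(b) Θ_ι(c)_{i+1,i}
      = Θ_ι(c)_{i+1,i+1} · ∑_{1≤m≤k, i_m=i} c_m⁻¹ ∏_{l=m+1}^k c_l^{−a_{i_l,i}},
where (a_{pq}) is the Cartan matrix of type A_n. (0-based indices are used for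
the letters; the matrix entry 1-based (i,i) is the 0-based (i−1,i−1) one.)
-/

/-- `y_i(t) = I + t E_{i+1,i}` in `SL_{n+1}(ℂ)` (rows and columns of matrices are
indexed by `Fin (n+1)`; the letter `i` ranges over `0,…,n-1`, corresponding to
the 1-based index `i+1 ∈ {1,…,n}`). Junk value `I` for `i ≥ n`. -/
noncomputable def ymat (n : ℕ) (i : ℕ) (t : ℂ) : Matrix (Fin (n + 1)) (Fin (n + 1)) ℂ :=
  if h : i < n then 1 + Matrix.single ⟨i + 1, by omega⟩ ⟨i, by omega⟩ t else 1

/-- `x_i(t) = I + t E_{i,i+1}`. Junk value `I` for `i ≥ n`. -/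
noncomputable def xmat (n : ℕ) (i : ℕ) (t : ℂ) : Matrix (Fin (n + 1)) (Fin (n + 1)) ℂ :=
  if h : i < n then 1 + Matrix.single ⟨i, by omega⟩ ⟨i + 1, by omega⟩ t else 1

/-- `α_i^∨(s)`: the diagonal matrix with `s` at position `i`, `s⁻¹` at position
`i+1`, and `1` elsewhere. -/
noncomputable def avmat (n : ℕ) (i : ℕ) (s : ℂ) : Matrix (Fin (n + 1)) (Fin (n + 1)) ℂ :=
  Matrix.diagonal (fun j => if (j : ℕ) = i then s else if (j : ℕ) = i + 1 then s⁻¹ else 1)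

/-- `s̄_i = x_i(−1) y_i(1) x_i(−1)`. -/
noncomputable def sbar (n : ℕ) (i : ℕ) : Matrix (Fin (n + 1)) (Fin (n + 1)) ℂ :=
  xmat n i (-1) * ymat n i 1 * xmat n i (-1)

/-- `Θ_ι(c) = y_{i_1}(c_1) α_{i_1}^∨(c_1⁻¹) ⋯ y_{i_k}(c_k) α_{i_k}^∨(c_k⁻¹)`. -/
noncomputable def theta (n : ℕ) {k : ℕ} (ι : Fin k → ℕ) (c : Fin k → ℂ) :
    Matrix (Fin (n + 1)) (Fin (n + 1)) ℂ :=
  (List.ofFn (fun m => ymat n (ι m) (c m) * avmat n (ι m) (c m)⁻¹)).prod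

/-- `w̄ = s̄_{i_1} ⋯ s̄_{i_k}` for a word `ι`. -/
noncomputable def wbar (n : ℕ) {k : ℕ} (ι : Fin k → ℕ) : Matrix (Fin (n + 1)) (Fin (n + 1)) ℂ :=
  (List.ofFn (fun m => sbar n (ι m))).prod

/-- The determinant of the upper-left `i×i` submatrix of `M` (junk value `0` if
`i > n+1`). -/
noncomputable def ulMinor {n : ℕ} (M : Matrix (Fin (n + 1)) (Fin (n + 1)) ℂ) (i : ℕ) : ℂ :=
  if h : i ≤ n + 1 then
    (M.submatrix (Fin.castLE h) (Fin.castLE h) : Matrix (Fin i) (Fin i) ℂ).det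
  else 0

/-- The adjacent transposition `s_i = (i, i+1)` of `S_{n+1}` (1-based
`(i+1, i+2)`); junk value `1` for `i ≥ n`. -/
noncomputable def sperm (n : ℕ) (i : ℕ) : Equiv.Perm (Fin (n + 1)) :=
  if h : i < n then Equiv.swap ⟨i, by omega⟩ ⟨i + 1, by omega⟩ else 1

/-- The Cartan matrix of type `A_n` (on 0-based indices):
`a_{pp} = 2`, `a_{pq} = −1` if `|p−q| = 1`, and `0` otherwise. -/
def cartanA (p q : ℕ) : ℤ :=
  if p = q then 2 else if p = q + 1 ∨ q = p + 1 then -1 else 0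

noncomputable def dee (n j : ℕ) (t : ℂ) (q : Fin (n + 1)) : ℂ :=
  if (q : ℕ) = j then t⁻¹ else if (q : ℕ) = j + 1 then t else 1

lemma dee_ne_zero {n j : ℕ} {t : ℂ} (ht : t ≠ 0) (q : Fin (n + 1)) : dee n j t q ≠ 0 := by
  unfold dee; split_ifs <;> simp [ht]

lemma avmat_eq (n j : ℕ) (t : ℂ) : avmat n j t⁻¹ = Matrix.diagonal (dee n j t) := by
  unfold avmat
  have h : (fun (q : Fin (n + 1)) => if (q : ℕ) = j then t⁻¹ else if (q : ℕ) = j + 1 then t⁻¹⁻¹ else 1)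
      = dee n j t := by
    funext q; unfold dee; split_ifs <;> simp
  rw [h]

lemma dee_ratio {n j : ℕ} {t : ℂ} (ht : t ≠ 0) (i : Fin n) :
    dee n j t i.castSucc = dee n j t i.succ * t ^ (-(cartanA j (i : ℕ))) := by
  unfold dee
  simp only [Fin.coe_castSucc, Fin.val_succ]
  by_cases h1 : (i : ℕ) = j
  · have ha : cartanA j (i : ℕ) = 2 := by simp [cartanA, h1.symm]
    rw [ha, if_pos h1, if_neg (by omega : ¬ (i : ℕ) + 1 = j),
      if_pos (by omega : (i : ℕ) + 1 = j + 1),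
      show (-(2:ℤ)) = -1 + -1 by ring, zpow_add₀ ht, zpow_neg_one]
    field_simp
  · by_cases h2 : (i : ℕ) = j + 1
    · have ha : cartanA j (i : ℕ) = -1 := by
        unfold cartanA
        rw [if_neg (fun h => h1 h.symm), if_pos (Or.inr h2)]
      rw [ha, if_neg h1, if_pos h2, if_neg (by omega : ¬ (i : ℕ) + 1 = j),
        if_neg (by omega : ¬ (i : ℕ) + 1 = j + 1)]
      simp
    · by_cases h3 : (i : ℕ) + 1 = j
      · have ha : cartanA j (i : ℕ) = -1 := by
          unfold cartanA
          rw [if_neg (fun h => h1 h.symm), if_pos (Or.inl (by omega))]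
        rw [ha, if_neg h1, if_neg h2, if_pos h3]
        simp [ht]
      · have ha : cartanA j (i : ℕ) = 0 := by
          unfold cartanA
          rw [if_neg (fun h => h1 h.symm), if_neg (by omega)]
        rw [ha, if_neg h1, if_neg h2, if_neg h3,
          if_neg (by omega : ¬ (i : ℕ) + 1 = j + 1)]
        simp

lemma factor_eq (n : ℕ) {j : ℕ} (hj : j < n) {t : ℂ} (ht : t ≠ 0) :
    ymat n j t * avmat n j t⁻¹ =
      Matrix.diagonal (dee n j t) +
        Matrix.single (⟨j + 1, by omega⟩ : Fin (n + 1)) ⟨j, by omega⟩ 1 := by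
  rw [avmat_eq, ymat, dif_pos hj, add_mul, one_mul]
  congr 1
  ext p q
  rw [Matrix.mul_diagonal]
  simp only [Matrix.single, Matrix.of_apply]
  split_ifs with h
  · obtain ⟨h1, h2⟩ := h
    have : dee n j t q = t⁻¹ := by
      unfold dee; rw [if_pos (by rw [← h2])]
    rw [this, mul_inv_cancel₀ ht]
  · rw [zero_mul]

lemma theta_succ (n : ℕ) {k : ℕ} (ι : Fin (k + 1) → ℕ) (c : Fin (k + 1) → ℂ) :
    theta n ι c = theta n (ι ∘ Fin.castSucc) (c ∘ Fin.castSucc) *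
      (ymat n (ι (Fin.last k)) (c (Fin.last k)) * avmat n (ι (Fin.last k)) (c (Fin.last k))⁻¹) := by
  unfold theta
  rw [List.ofFn_succ', List.concat_eq_append, List.prod_append, List.prod_singleton]
  rfl

lemma theta_key {n k : ℕ} : ∀ (ι : Fin k → ℕ), (∀ m, ι m < n) → ∀ (c : Fin k → ℂ), (∀ m, c m ≠ 0) →
    (∀ p q : Fin (n + 1), p < q → theta n ι c p q = 0) ∧
    (∀ p : Fin (n + 1), theta n ι c p p = ∏ m, dee n (ι m) (c m) p) ∧
    (∀ i : Fin n, theta n ι c i.succ i.castSucc =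
      (∏ m, dee n (ι m) (c m) i.succ) *
        ∑ m ∈ Finset.univ.filter (fun m : Fin k => ι m = (i : ℕ)),
          (c m)⁻¹ * ∏ l ∈ Finset.univ.filter (fun l : Fin k => m < l),
            (c l) ^ (-(cartanA (ι l) (i : ℕ)))) := by
  induction k with
  | zero =>
    intro ι hlt c hc
    have h1 : theta n ι c = 1 := by simp [theta]
    refine ⟨fun p q hpq => ?_, fun p => ?_, fun i => ?_⟩
    · rw [h1]; exact Matrix.one_apply_ne (ne_of_lt hpq)
    · rw [h1]; simp
    · rw [h1]
      have : (i.succ : Fin (n + 1)) ≠ i.castSucc := by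
        simp [Fin.ext_iff]
      simp [Matrix.one_apply_ne this]
  | succ k ih =>
    intro ι hlt c hc
    set j := ι (Fin.last k) with hjdef
    set t := c (Fin.last k) with htdef
    have hjn : j < n := hlt _
    have ht : t ≠ 0 := hc _
    obtain ⟨hA1, hA2, hA3⟩ := ih (ι ∘ Fin.castSucc) (fun m => hlt _) (c ∘ Fin.castSucc) (fun m => hc _)
    simp only [Function.comp_apply] at hA2 hA3
    set A := theta n (ι ∘ Fin.castSucc) (c ∘ Fin.castSucc) with hAdef
    have hTheta : ∀ p q : Fin (n + 1),
        theta n ι c p q = A p q * dee n j t q +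
          (if q = (⟨j, by omega⟩ : Fin (n + 1)) then A p ⟨j + 1, by omega⟩ else 0) := by
      intro p q
      rw [theta_succ, factor_eq n hjn ht, Matrix.mul_add, Matrix.add_apply, Matrix.mul_diagonal]
      congr 1
      by_cases hq : q = (⟨j, by omega⟩ : Fin (n + 1))
      · subst hq
        rw [if_pos rfl, Matrix.mul_single_apply_same, mul_one]
      · rw [if_neg hq, Matrix.mul_single_apply_of_ne (hbj := hq)]
    refine ⟨fun p q hpq => ?_, fun p => ?_, fun i => ?_⟩
    · rw [hTheta, hA1 p q hpq, zero_mul, zero_add]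
      split_ifs with hq
      · refine hA1 p _ (lt_trans hpq ?_)
        rw [hq]
        simp [Fin.lt_def]
      · rfl
    · rw [hTheta, Fin.prod_univ_castSucc]
      have hz : (if p = (⟨j, by omega⟩ : Fin (n + 1)) then A p ⟨j + 1, by omega⟩ else 0) = 0 := by
        split_ifs with hq
        · exact hA1 p _ (by rw [hq]; simp [Fin.lt_def])
        · rfl
      rw [hz, add_zero, hA2]
    · -- subdiagonal
      rw [hTheta, hA3 i]
      set r : Fin (k + 1) → ℂ := fun l => (c l) ^ (-(cartanA (ι l) (i : ℕ))) with hrdef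
      set P : ℂ := ∏ m : Fin k, dee n (ι m.castSucc) (c m.castSucc) i.succ with hPdef
      set S : ℂ := ∑ m ∈ Finset.univ.filter (fun m : Fin k => ι m.castSucc = (i : ℕ)),
          (c m.castSucc)⁻¹ * ∏ l ∈ Finset.univ.filter (fun l : Fin k => m < l),
            (c l.castSucc) ^ (-(cartanA (ι l.castSucc) (i : ℕ))) with hSdef
      -- the full products/sums over Fin (k+1)
      have hProd : (∏ m : Fin (k + 1), dee n (ι m) (c m) i.succ) = P * dee n j t i.succ := by
        rw [Fin.prod_univ_castSucc]
      have hQ : ∀ m : Fin k,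
          (∏ l ∈ Finset.univ.filter (fun l : Fin (k + 1) => m.castSucc < l), r l)
            = (∏ l ∈ Finset.univ.filter (fun l : Fin k => m < l),
                (c l.castSucc) ^ (-(cartanA (ι l.castSucc) (i : ℕ)))) * r (Fin.last k) := by
        intro m
        rw [Finset.prod_filter, Finset.prod_filter, Fin.prod_univ_castSucc,
          if_pos (by simp [Fin.lt_def, m.isLt] : m.castSucc < Fin.last k)]
        congr 1
      have hSum : (∑ m ∈ Finset.univ.filter (fun m : Fin (k + 1) => ι m = (i : ℕ)),
            (c m)⁻¹ * ∏ l ∈ Finset.univ.filter (fun l : Fin (k + 1) => m < l), r l)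
          = S * r (Fin.last k) + (if j = (i : ℕ) then t⁻¹ else 0) := by
        rw [Finset.sum_filter, Fin.sum_univ_castSucc]
        have hlast : (if ι (Fin.last k) = (i : ℕ) then
            (c (Fin.last k))⁻¹ * ∏ l ∈ Finset.univ.filter (fun l : Fin (k + 1) => Fin.last k < l), r l
            else 0) = (if j = (i : ℕ) then t⁻¹ else 0) := by
          have hempty : Finset.univ.filter (fun l : Fin (k + 1) => Fin.last k < l) = ∅ := by
            apply Finset.filter_false_of_mem
            intro l _
            simp [Fin.lt_def, Nat.lt_succ_iff.mp l.isLt]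
          rw [hempty, Finset.prod_empty, mul_one]
        rw [hlast]
        congr 1
        rw [hSdef, Finset.sum_filter, Finset.sum_mul]
        refine Finset.sum_congr rfl fun m _ => ?_
        split_ifs with hm
        · rw [hQ m, mul_assoc]
        · rw [zero_mul]
      rw [hProd, hSum]
      -- now pure algebra
      have hratio : dee n j t i.castSucc = dee n j t i.succ * r (Fin.last k) := dee_ratio ht i
      by_cases hji : (⟨j, by omega⟩ : Fin (n + 1)) = i.castSucc
      · have hj_i : j = (i : ℕ) := by
          have := congrArg Fin.val hji; simpa using this
        have hsuccj : (⟨j + 1, by omega⟩ : Fin (n + 1)) = i.succ := by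
          simp [Fin.ext_iff, hj_i]
        have hdsucc : dee n j t i.succ = t := by
          unfold dee
          rw [if_neg (by simp [hj_i] : ¬ ((i.succ : Fin (n+1)) : ℕ) = j),
            if_pos (by simp [hj_i])]
        rw [if_pos hji.symm, hsuccj, hA2 i.succ, ← hPdef, if_pos hj_i, hratio, hdsucc]
        field_simp
      · have hj_i : j ≠ (i : ℕ) := fun h => hji (by simp [Fin.ext_iff, h])
        rw [if_neg (fun h => hji h.symm), if_neg hj_i, add_zero, add_zero, hratio]
        ring

/-- `Θ_ι(c)` is lower triangular with nonzero diagonal, its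
consecutive diagonal ratios are `∏_l c_l^{−a_{i_l,i}}`, and its subdiagonal
entries are given by
`Θ_{i+1,i} = Θ_{i+1,i+1} ∑_{m : i_m = i} c_m⁻¹ ∏_{l>m} c_l^{−a_{i_l,i}}`. -/
theorem theta_entries {n k : ℕ} (ι : Fin k → ℕ) (hlt : ∀ m, ι m < n)
    (hred : ∀ l' : List ℕ, (∀ x ∈ l', x < n) →
      (l'.map (sperm n)).prod = (List.ofFn (fun m => sperm n (ι m))).prod →
      k ≤ l'.length)
    (c : Fin k → ℂ) (hc : ∀ m, c m ≠ 0) :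
    (∀ p q : Fin (n + 1), p < q → theta n ι c p q = 0) ∧
    (∀ p : Fin (n + 1), theta n ι c p p ≠ 0) ∧
    (∀ i : Fin n,
      theta n ι c i.castSucc i.castSucc / theta n ι c i.succ i.succ
        = ∏ l : Fin k, (c l) ^ (-(cartanA (ι l) (i : ℕ)))) ∧
    (∀ i : Fin n,
      theta n ι c i.succ i.castSucc
        = theta n ι c i.succ i.succ *
            ∑ m ∈ Finset.univ.filter (fun m : Fin k => ι m = (i : ℕ)),
              (c m)⁻¹ * ∏ l ∈ Finset.univ.filter (fun l : Fin k => m < l),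
                (c l) ^ (-(cartanA (ι l) (i : ℕ)))) := by
  obtain ⟨h1, h2, h3⟩ := theta_key ι hlt c hc
  have hdnz : ∀ p : Fin (n + 1), (∏ m, dee n (ι m) (c m) p) ≠ 0 := fun p =>
    Finset.prod_ne_zero_iff.mpr fun m _ => dee_ne_zero (hc m) p
  refine ⟨h1, fun p => by rw [h2]; exact hdnz p, fun i => ?_, fun i => ?_⟩
  · rw [h2, h2]
    have hsplit : (∏ m, dee n (ι m) (c m) i.castSucc)
        = (∏ m, dee n (ι m) (c m) i.succ) * ∏ l : Fin k, (c l) ^ (-(cartanA (ι l) (i : ℕ))) := by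
      rw [← Finset.prod_mul_distrib]
      exact Finset.prod_congr rfl fun m _ => dee_ratio (hc m) i
    rw [hsplit, mul_comm, mul_div_assoc, div_self (hdnz i.succ), mul_one]
  · rw [h3 i, h2 i.succ]
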